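/- Let R = ⊕_{p≥0} R_p be a commutative ℕ-graded ring and for a ∈ ℤ set F^aR := ⊕_{p≤a} R_p. Let y₁,…,yₙ ∈ R be elements of the form yᵢ = xᵢ + (element of F^{kᵢ−1}R), where xᵢ ∈ R_{kᵢ} is homogeneous of degree kᵢ. Suppose x₁,…,xₙ is an R-regular sequence in every order (i.e. every permutation of x₁,…,xₙ is an R-regular sequence). If r₁,…,r_l ∈ R (with l ≤ n) and z := r₁y₁ + ⋯ + r_l y_l ∈ F^aR for some a ∈ ℤ, then the homogeneous component of z of degree a lies in the ideal (x₁,…,x_l). -/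

import Mathlib

/-- A sequence (given as a list) `a₁, …, aₙ` in a commutative ring `A` is `A`-regular if for
each `i`, `aᵢ` is not a zero divisor on `A ⧸ (a₁, …, a_{i-1})`. -/
def IsRegularSeq {A : Type*} [CommRing A] (l : List A) : Prop :=
  ∀ (i : ℕ) (h : i < l.length), ∀ x : A,
    l.get ⟨i, h⟩ * x ∈ Ideal.span {y | y ∈ l.take i} →
      x ∈ Ideal.span {y | y ∈ l.take i}

/-- `Fmem 𝒜 a r` says that `r ∈ F^aR = ⊕_{p ≤ a} R_p`: all homogeneous components of `r`
of degree `> a` vanish. -/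
def Fmem {R : Type*} [CommRing R] (𝒜 : ℕ → AddSubgroup R) [GradedRing 𝒜] (a : ℤ)
    (r : R) : Prop :=
  ∀ p : ℕ, a < (p : ℤ) → (DirectSum.decompose 𝒜 r p : R) = 0


section helpers
variable {R : Type*} [CommRing R] (𝒜 : ℕ → AddSubgroup R) [GradedRing 𝒜]

lemma Fmem_sub {a : ℤ} {u v : R} (hu : Fmem 𝒜 a u) (hv : Fmem 𝒜 a v) :
    Fmem 𝒜 a (u - v) := by
  intro p hp
  rw [DirectSum.decompose_sub, DirectSum.sub_apply]
  push_cast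
  rw [hu p hp, hv p hp, sub_zero]

lemma Fmem_mono {a b : ℤ} (hab : a ≤ b) {u : R} (hu : Fmem 𝒜 a u) : Fmem 𝒜 b u :=
  fun p hp => hu p (lt_of_le_of_lt hab hp)

lemma Fmem_of_mem {k : ℕ} {u : R} (hu : u ∈ 𝒜 k) : Fmem 𝒜 k u := by
  intro p hp
  exact DirectSum.decompose_of_mem_ne 𝒜 hu (by exact_mod_cast hp.ne)

lemma Fmem_sum {ι : Type*} (s : Finset ι) (f : ι → R) {a : ℤ}
    (hf : ∀ i ∈ s, Fmem 𝒜 a (f i)) : Fmem 𝒜 a (∑ i ∈ s, f i) := by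
  intro p hp
  rw [DirectSum.decompose_sum, DFinsupp.finset_sum_apply]
  push_cast
  exact Finset.sum_eq_zero fun i hi => hf i hi p hp

lemma Fmem_mul {a b : ℤ} {u v : R} (hu : Fmem 𝒜 a u) (hv : Fmem 𝒜 b v) :
    Fmem 𝒜 (a + b) (u * v) := by
  intro p hp
  classical
  rw [DirectSum.decompose_mul, DirectSum.coe_mul_apply]
  apply Finset.sum_eq_zero
  rintro ⟨q, s⟩ hqs
  simp only [Finset.mem_filter, Finset.mem_product] at hqs
  obtain ⟨-, hsum⟩ := hqs
  by_cases hq : a < (q : ℤ)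
  · rw [hu q hq, zero_mul]
  · have hs : b < (s : ℤ) := by
      push_neg at hq
      have : (q : ℤ) + s = p := by exact_mod_cast hsum
      omega
    rw [hv s hs, mul_zero]

end helpers

section helpers2
variable {R : Type*} [CommRing R] (𝒜 : ℕ → AddSubgroup R) [GradedRing 𝒜]

/-- Homogeneous components of elements of an ideal spanned by homogeneous elements
stay in the ideal. -/
lemma span_decompose_mem {ι : Type*} [Fintype ι] (v : ι → R) (d : ι → ℕ)
    (hv : ∀ j, v j ∈ 𝒜 (d j)) {u : R} (hu : u ∈ Ideal.span (Set.range v)) (q : ℕ) :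
    (DirectSum.decompose 𝒜 u q : R) ∈ Ideal.span (Set.range v) := by
  classical
  obtain ⟨c, hc⟩ := (Submodule.mem_span_range_iff_exists_fun R).mp hu
  simp only [smul_eq_mul] at hc
  rw [← hc, DirectSum.decompose_sum, DFinsupp.finset_sum_apply]
  push_cast
  apply Ideal.sum_mem
  intro j _
  rw [DirectSum.coe_decompose_mul_of_right_mem 𝒜 q (hv j)]
  split
  · exact Ideal.mul_mem_left _ _ (Ideal.subset_span ⟨j, rfl⟩)
  · exact Ideal.zero_mem _

/-- A homogeneous element of an ideal spanned by homogeneous elements has a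
homogeneous representation. -/
lemma span_homog_rep {ι : Type*} [Fintype ι] (v : ι → R) (d : ι → ℕ)
    (hv : ∀ j, v j ∈ 𝒜 (d j)) {u : R} {q : ℕ} (huq : u ∈ 𝒜 q)
    (hu : u ∈ Ideal.span (Set.range v)) :
    ∃ c : ι → R, (∀ j, c j ∈ 𝒜 (q - d j)) ∧ (∀ j, ¬ d j ≤ q → c j = 0) ∧
      u = ∑ j, c j * v j := by
  classical
  obtain ⟨c₀, hc₀⟩ := (Submodule.mem_span_range_iff_exists_fun R).mp hu
  simp only [smul_eq_mul] at hc₀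
  refine ⟨fun j => if d j ≤ q then (DirectSum.decompose 𝒜 (c₀ j) (q - d j) : R) else 0,
    fun j => ?_, fun j h => by simp [h], ?_⟩
  · simp only
    split
    · exact (DirectSum.decompose 𝒜 (c₀ j) (q - d j)).2
    · exact zero_mem _
  · have : u = (DirectSum.decompose 𝒜 u q : R) :=
      (DirectSum.decompose_of_mem_same 𝒜 huq).symm
    rw [this]
    nth_rewrite 1 [← hc₀]
    rw [DirectSum.decompose_sum, DFinsupp.finset_sum_apply]
    push_cast
    apply Finset.sum_congr rfl
    intro j _
    rw [DirectSum.coe_decompose_mul_of_right_mem 𝒜 q (hv j)]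
    split <;> simp

end helpers2

section koszul
variable {R : Type*} [CommRing R]

/-- The regularity hypothesis needed for the Koszul-type syzygy lemma: for every initial
segment and every element of it, that element is regular modulo the others. -/
def HypAll {m : ℕ} (v : Fin m → R) : Prop :=
  ∀ (p : ℕ) (hp : p ≤ m) (i : Fin p) (t : R),
    v (Fin.castLE hp i) * t ∈
        Ideal.span {r | ∃ j : Fin p, j ≠ i ∧ r = v (Fin.castLE hp j)} →
      t ∈ Ideal.span {r | ∃ j : Fin p, j ≠ i ∧ r = v (Fin.castLE hp j)}

lemma koszul_antisym : ∀ (m : ℕ) (v : Fin m → R), HypAll v → ∀ c : Fin m → R,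
    (∑ j, c j * v j = 0) → ∃ M : Fin m → Fin m → R,
      (∀ i j, M i j = - M j i) ∧ (∀ i, M i i = 0) ∧ ∀ i, c i = ∑ j, M i j * v j := by
  intro m
  induction m with
  | zero => exact fun v _ c _ => ⟨fun _ _ => 0, fun i => i.elim0, fun i => i.elim0, fun i => i.elim0⟩
  | succ m ih =>
    intro v hv c hc
    have hcastLE : ∀ (p : ℕ) (hp : p ≤ m) (j : Fin p),
        Fin.castSucc (Fin.castLE hp j) = Fin.castLE (hp.trans (Nat.le_succ m)) j := by
      intro p hp j; ext; simp
    have hv' : HypAll (v ∘ Fin.castSucc) := by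
      intro p hp i t h
      have hset : {r | ∃ j : Fin p, j ≠ i ∧ r = (v ∘ Fin.castSucc) (Fin.castLE hp j)} =
          {r | ∃ j : Fin p, j ≠ i ∧ r = v (Fin.castLE (hp.trans (Nat.le_succ m)) j)} := by
        ext r; simp only [Set.mem_setOf_eq, Function.comp_apply, hcastLE p hp]
      rw [hset] at h ⊢
      apply hv p (hp.trans (Nat.le_succ m)) i t
      simpa [hcastLE p hp i] using h
    -- the span of all but the last
    have hsetlast : {r | ∃ j : Fin (m+1), j ≠ Fin.last m ∧ r = v (Fin.castLE le_rfl j)} =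
        Set.range (v ∘ Fin.castSucc) := by
      ext r
      constructor
      · rintro ⟨j, hj, rfl⟩
        obtain ⟨j', rfl⟩ := Fin.exists_castSucc_eq.mpr hj
        exact ⟨j', rfl⟩
      · rintro ⟨j', rfl⟩
        exact ⟨Fin.castSucc j', (Fin.castSucc_lt_last j').ne, rfl⟩
    have hclast : c (Fin.last m) ∈ Ideal.span (Set.range (v ∘ Fin.castSucc)) := by
      rw [← hsetlast]
      apply hv (m+1) le_rfl (Fin.last m)
      rw [hsetlast]
      have : v (Fin.castLE le_rfl (Fin.last m)) * c (Fin.last m) =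
          - ∑ j : Fin m, c (Fin.castSucc j) * v (Fin.castSucc j) := by
        have h2 := Fin.sum_univ_castSucc (f := fun j => c j * v j)
        rw [hc] at h2
        have : Fin.castLE le_rfl (Fin.last m) = Fin.last m := by ext; simp
        rw [this]
        linear_combination -h2
      rw [this]
      exact neg_mem (Ideal.sum_mem _ (fun j _ =>
        Ideal.mul_mem_left _ _ (Ideal.subset_span ⟨j, rfl⟩)))
    obtain ⟨d, hd⟩ := (Submodule.mem_span_range_iff_exists_fun R).mp hclast
    simp only [smul_eq_mul, Function.comp_apply] at hd
    set c' : Fin m → R := fun j => c (Fin.castSucc j) + d j * v (Fin.last m) with hc'def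
    have hc' : ∑ j, c' j * (v ∘ Fin.castSucc) j = 0 := by
      have h2 := Fin.sum_univ_castSucc (f := fun j => c j * v j)
      rw [hc] at h2
      simp only [hc'def, Function.comp_apply, add_mul, Finset.sum_add_distrib]
      have h3 : ∑ j : Fin m, d j * v (Fin.last m) * v (Fin.castSucc j) =
          c (Fin.last m) * v (Fin.last m) := by
        rw [← hd, Finset.sum_mul]
        apply Finset.sum_congr rfl
        intro j _; ring
      rw [h3]
      linear_combination -h2
    obtain ⟨M', hM'anti, hM'diag, hM'⟩ := ih (v ∘ Fin.castSucc) hv' c' hc'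
    refine ⟨fun i => Fin.lastCases
        (Fin.lastCases 0 (fun j' => d j') : Fin (m+1) → R)
        (fun i' => Fin.lastCases (-(d i')) (fun j' => M' i' j')) i, ?_, ?_, ?_⟩
    · intro i j
      refine Fin.lastCases ?_ (fun i' => ?_) i <;> refine Fin.lastCases ?_ (fun j' => ?_) j
      · simp
      · simp
      · simp
      · simp only [Fin.lastCases_castSucc]
        exact hM'anti i' j'
    · intro i
      refine Fin.lastCases ?_ (fun i' => ?_) i
      · simp
      · simp only [Fin.lastCases_castSucc]
        exact hM'diag i'
    · intro i
      refine Fin.lastCases ?_ (fun i' => ?_) i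
      · rw [Fin.sum_univ_castSucc]
        simp only [Fin.lastCases_last, Fin.lastCases_castSucc, zero_mul, add_zero]
        rw [← hd]
      · rw [Fin.sum_univ_castSucc]
        simp only [Fin.lastCases_last, Fin.lastCases_castSucc]
        have := hM' i'
        simp only [Function.comp_apply] at this
        have hci : c (Fin.castSucc i') = c' i' - d i' * v (Fin.last m) := by
          simp [hc'def]
        rw [hci, this]
        ring
end koszul


section reg
variable {R : Type*} [CommRing R]

lemma reg_step {n : ℕ} (x : Fin n → R)
    (hreg : ∀ L : List R, L.Perm (List.ofFn x) → IsRegularSeq L)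
    {p : ℕ} (hp : p ≤ n) (i : Fin p) (t : R)
    (h : x (Fin.castLE hp i) * t ∈
      Ideal.span {r | ∃ j : Fin p, j ≠ i ∧ r = x (Fin.castLE hp j)}) :
    t ∈ Ideal.span {r | ∃ j : Fin p, j ≠ i ∧ r = x (Fin.castLE hp j)} := by
  have hlenX : (List.ofFn x).length = n := by simp
  have hlenT : ((List.ofFn x).take p).length = p := by
    simp [hlenX, Nat.min_eq_left hp]
  have hlenA : (((List.ofFn x).take p).eraseIdx i.1).length = p - 1 := by
    rw [List.length_eraseIdx_of_lt (by rw [hlenT]; exact i.isLt), hlenT]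
  have hTget : ∀ (m : ℕ) (hm : m < ((List.ofFn x).take p).length),
      ((List.ofFn x).take p)[m] = x ⟨m, lt_of_lt_of_le (hlenT ▸ hm) hp⟩ := by
    intro m hm
    rw [List.getElem_take, List.getElem_ofFn]
  have hTi : ((List.ofFn x).take p)[i.1]'(by rw [hlenT]; exact i.isLt) =
      x (Fin.castLE hp i) := by
    rw [hTget]; congr 1
  have hperm : (((List.ofFn x).take p).eraseIdx i.1 ++
      x (Fin.castLE hp i) :: (List.ofFn x).drop p).Perm (List.ofFn x) := by
    have h1 : (((List.ofFn x).take p).drop (i.1 + 1) ++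
        x (Fin.castLE hp i) :: (List.ofFn x).drop p).Perm
        (x (Fin.castLE hp i) :: (((List.ofFn x).take p).drop (i.1 + 1) ++
          (List.ofFn x).drop p)) :=
      List.perm_middle
    have h2 := h1.append_left (((List.ofFn x).take p).take i.1)
    rw [List.eraseIdx_eq_take_drop_succ, List.append_assoc]
    have h4 : ((List.ofFn x).take p).drop i.1 =
        x (Fin.castLE hp i) :: ((List.ofFn x).take p).drop (i.1 + 1) := by
      rw [← hTi]
      exact List.drop_eq_getElem_cons _
    have h3 : ((List.ofFn x).take p).take i.1 ++
        (x (Fin.castLE hp i) :: (((List.ofFn x).take p).drop (i.1 + 1) ++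
          (List.ofFn x).drop p)) = List.ofFn x := by
      rw [← List.cons_append, ← h4, ← List.append_assoc, List.take_append_drop,
        List.take_append_drop]
    rw [h3] at h2
    exact h2
  have hregL := hreg _ hperm
  have hq : p - 1 < (((List.ofFn x).take p).eraseIdx i.1 ++
      x (Fin.castLE hp i) :: (List.ofFn x).drop p).length := by
    simp only [List.length_append, List.length_cons, hlenA]; omega
  have htake : (((List.ofFn x).take p).eraseIdx i.1 ++
      x (Fin.castLE hp i) :: (List.ofFn x).drop p).take (p - 1) =
      ((List.ofFn x).take p).eraseIdx i.1 :=
    List.take_left' hlenA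
  have hget : (((List.ofFn x).take p).eraseIdx i.1 ++
      x (Fin.castLE hp i) :: (List.ofFn x).drop p).get ⟨p - 1, hq⟩ =
      x (Fin.castLE hp i) := by
    rw [List.get_eq_getElem, List.getElem_append_right (by rw [hlenA])]
    simp [hlenA]
  have hset : {y : R | y ∈ (((List.ofFn x).take p).eraseIdx i.1)} =
      {r | ∃ j : Fin p, j ≠ i ∧ r = x (Fin.castLE hp j)} := by
    ext y
    simp only [Set.mem_setOf_eq, List.mem_iff_getElem]
    constructor
    · rintro ⟨q, hq', rfl⟩
      have hq'' : q < p - 1 := hlenA ▸ hq'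
      rw [List.getElem_eraseIdx]
      split
      · refine ⟨⟨q, by omega⟩, ?_, ?_⟩
        · intro hcontra
          rw [Fin.ext_iff] at hcontra
          simp only at hcontra
          omega
        · rw [hTget]; congr 1
      · refine ⟨⟨q + 1, by omega⟩, ?_, ?_⟩
        · intro hcontra
          rw [Fin.ext_iff] at hcontra
          simp only at hcontra
          omega
        · rw [hTget]; congr 1
    · rintro ⟨j, hj, rfl⟩
      have hji : j.1 ≠ i.1 := fun hc => hj (Fin.ext hc)
      rcases Nat.lt_or_ge j.1 i.1 with hlt | hge
      · refine ⟨j.1, by rw [hlenA]; omega, ?_⟩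
        rw [List.getElem_eraseIdx_of_lt _ hlt, hTget]
        congr 1
      · have hgt : i.1 < j.1 := by omega
        refine ⟨j.1 - 1, by rw [hlenA]; omega, ?_⟩
        rw [List.getElem_eraseIdx_of_ge _ (by omega), hTget]
        congr 1
        ext
        simp only [Fin.coe_castLE]
        omega
  have hfin := hregL (p - 1) hq t (by rw [htake, hset, hget]; exact h)
  rwa [htake, hset] at hfin

end reg

section mainproof
variable {R : Type*} [CommRing R] (𝒜 : ℕ → AddSubgroup R) [GradedRing 𝒜]

lemma sum_antisym {l : ℕ} (A : Fin l → Fin l → R) (ha : ∀ i j, A i j = -A j i)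
    (hd : ∀ i, A i i = 0) : ∑ i, ∑ j, A i j = 0 := by
  have key : ∑ p : Fin l × Fin l, A p.1 p.2 = 0 := by
    apply Finset.sum_ninvolution Prod.swap
    · intro p
      simp only [Prod.fst_swap, Prod.snd_swap]
      rw [ha p.1 p.2]
      ring
    · intro p hp heq
      apply hp
      have h1 : p.2 = p.1 := congrArg Prod.fst heq
      rw [h1, hd]
    · intro p; exact Finset.mem_univ _
    · intro p; exact Prod.swap_swap p
  rw [Fintype.sum_prod_type] at key
  exact key

lemma Fmem_sub_top (u : R) (m : ℕ) (hu : Fmem 𝒜 (m : ℤ) u) :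
    Fmem 𝒜 ((m : ℤ) - 1) (u - (DirectSum.decompose 𝒜 u m : R)) := by
  intro p hp
  rw [DirectSum.decompose_sub, DirectSum.sub_apply]
  push_cast
  rcases eq_or_ne p m with rfl | hne
  · rw [DirectSum.decompose_of_mem_same 𝒜 (DirectSum.decompose 𝒜 u p).2, sub_self]
  · have hpm : (m : ℤ) < p := by
      rcases lt_or_ge (m : ℤ) (p : ℤ) with h | h
      · exact h
      · exfalso; apply hne; have : (p:ℤ) = m := by omega
        exact_mod_cast this
    rw [hu p hpm, DirectSum.decompose_of_mem_ne 𝒜 (DirectSum.decompose 𝒜 u m).2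
      (fun hc => hne (by exact_mod_cast hc.symm)), sub_self]

lemma exists_Fmem (u : R) : ∃ c : ℕ, Fmem 𝒜 (c : ℤ) u := by
  classical
  refine ⟨(DirectSum.decompose 𝒜 u).support.sup id, fun p hp => ?_⟩
  have hnot : p ∉ (DirectSum.decompose 𝒜 u).support := by
    intro hmem
    have h2 : p ≤ (DirectSum.decompose 𝒜 u).support.sup id := Finset.le_sup (f := id) (b := p) hmem
    omega
  rw [DFinsupp.notMem_support_iff.mp hnot]
  rfl

lemma main_claim {n : ℕ} (x y : Fin n → R) (k : Fin n → ℕ)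
    (hx : ∀ i, x i ∈ 𝒜 (k i))
    (hxy : ∀ i, Fmem 𝒜 ((k i : ℤ) - 1) (y i - x i))
    (hreg : ∀ L : List R, L.Perm (List.ofFn x) → IsRegularSeq L)
    {l : ℕ} (hl : l ≤ n) (a : ℕ) :
    ∀ (N : ℕ) (r : Fin l → R),
      (∀ i, Fmem 𝒜 ((a : ℤ) + N - k (Fin.castLE hl i)) (r i)) →
      Fmem 𝒜 (a : ℤ) (∑ i, r i * y (Fin.castLE hl i)) →
      (DirectSum.decompose 𝒜 (∑ i, r i * y (Fin.castLE hl i)) a : R) ∈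
        Ideal.span (Set.range fun i : Fin l => x (Fin.castLE hl i)) := by
  classical
  have hdz : ∀ (r : Fin l → R) (q : ℕ),
      (DirectSum.decompose 𝒜 (∑ i, r i * y (Fin.castLE hl i)) q : R) =
      ∑ i, (DirectSum.decompose 𝒜 (r i * y (Fin.castLE hl i)) q : R) := by
    intro r q
    rw [DirectSum.decompose_sum, DFinsupp.finset_sum_apply]
    push_cast
    rfl
  have hterm : ∀ (r : Fin l → R) (i : Fin l) (q : ℕ),
      (DirectSum.decompose 𝒜 (r i * y (Fin.castLE hl i)) q : R) =
      (DirectSum.decompose 𝒜 (r i * x (Fin.castLE hl i)) q : R) +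
      (DirectSum.decompose 𝒜 (r i * (y (Fin.castLE hl i) - x (Fin.castLE hl i))) q : R) := by
    intro r i q
    rw [show r i * y (Fin.castLE hl i) = r i * x (Fin.castLE hl i) +
      r i * (y (Fin.castLE hl i) - x (Fin.castLE hl i)) by ring,
      DirectSum.decompose_add, DirectSum.add_apply]
    push_cast
    rfl
  intro N
  induction N with
  | zero =>
    intro r hr hFz
    rw [hdz]
    apply Ideal.sum_mem
    intro i _
    rw [hterm]
    apply Ideal.add_mem
    · rw [DirectSum.coe_decompose_mul_of_right_mem 𝒜 a (hx _)]
      split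
      · exact Ideal.mul_mem_left _ _ (Ideal.subset_span ⟨i, rfl⟩)
      · exact Ideal.zero_mem _
    · have h1 : Fmem 𝒜 ((a : ℤ) - 1)
          (r i * (y (Fin.castLE hl i) - x (Fin.castLE hl i))) :=
        Fmem_mono 𝒜 (le_of_eq (by push_cast; ring))
          (Fmem_mul 𝒜 (hr i) (hxy (Fin.castLE hl i)))
      rw [h1 a (by omega)]
      exact Ideal.zero_mem _
  | succ N ih =>
    intro r hr hFz
    have hlow : ∀ i : Fin l, Fmem 𝒜 ((a : ℤ) + N)
        (r i * (y (Fin.castLE hl i) - x (Fin.castLE hl i))) := fun i =>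
      Fmem_mono 𝒜 (le_of_eq (by push_cast; ring))
        (Fmem_mul 𝒜 (hr i) (hxy (Fin.castLE hl i)))
    set t : Fin l → R := fun i =>
      (DirectSum.decompose 𝒜 (r i) (a + N + 1 - k (Fin.castLE hl i)) : R) with htdef
    have htmem : ∀ i, t i ∈ 𝒜 (a + N + 1 - k (Fin.castLE hl i)) := fun i =>
      (DirectSum.decompose 𝒜 (r i) _).2
    have ht0 : ∀ i, ¬ (k (Fin.castLE hl i) ≤ a + N + 1) → t i = 0 := by
      intro i hni
      exact hr i _ (by push_cast; omega)
    -- the top-degree syzygy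
    have hsyz : ∑ i, t i * x (Fin.castLE hl i) = 0 := by
      have h0 : (DirectSum.decompose 𝒜 (∑ i, r i * y (Fin.castLE hl i)) (a + N + 1) : R)
          = 0 := hFz _ (by push_cast; omega)
      rw [hdz] at h0
      rw [← h0]
      apply Finset.sum_congr rfl
      intro i _
      rw [hterm, hlow i (a + N + 1) (by push_cast; omega), add_zero,
        DirectSum.coe_decompose_mul_of_right_mem 𝒜 _ (hx _)]
      split
      · rfl
      · rw [ht0 i (by assumption), zero_mul]
    -- regularity in the required form
    have hhyp : HypAll (fun i : Fin l => x (Fin.castLE hl i)) := by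
      intro p hp i t' ht'
      have hcast : ∀ j : Fin p,
          x (Fin.castLE hl (Fin.castLE hp j)) = x (Fin.castLE (hp.trans hl) j) := by
        intro j; congr 1
      simp only [hcast] at ht' ⊢
      exact reg_step x hreg (hp.trans hl) i t' ht'
    obtain ⟨M, hManti, hMdiag, hMrel⟩ :=
      koszul_antisym l (fun i => x (Fin.castLE hl i)) hhyp t hsyz
    -- componentwise version of M
    set M' : Fin l → Fin l → R := fun i j =>
      if k (Fin.castLE hl i) + k (Fin.castLE hl j) ≤ a + N + 1 then
        (DirectSum.decompose 𝒜 (M i j)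
          (a + N + 1 - (k (Fin.castLE hl i) + k (Fin.castLE hl j))) : R)
      else 0 with hM'def
    have hM'anti : ∀ i j, M' i j = - M' j i := by
      intro i j
      simp only [hM'def]
      rw [Nat.add_comm (k (Fin.castLE hl j)) (k (Fin.castLE hl i))]
      split
      · rw [hManti i j, DirectSum.decompose_neg, DFinsupp.neg_apply]
        push_cast
        ring
      · simp
    have hM'diag : ∀ i, M' i i = 0 := by
      intro i
      simp only [hM'def]
      split
      · rw [hMdiag i, DirectSum.decompose_zero]
        rfl
      · rfl
    have hM'fm : ∀ i j, Fmem 𝒜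
        ((a : ℤ) + N + 1 - k (Fin.castLE hl i) - k (Fin.castLE hl j)) (M' i j) := by
      intro i j
      simp only [hM'def]
      split
      · rename_i h
        refine Fmem_mono 𝒜 (le_of_eq ?_)
          (Fmem_of_mem 𝒜 (DirectSum.decompose 𝒜 (M i j) _).2)
        rw [Nat.cast_sub h]
        push_cast
        ring
      · intro p _
        rw [DirectSum.decompose_zero]
        rfl
    have hrel' : ∀ i, t i = ∑ j, M' i j * x (Fin.castLE hl j) := by
      intro i
      by_cases hki : k (Fin.castLE hl i) ≤ a + N + 1
      · have h1 := congrArg (fun u =>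
          (DirectSum.decompose 𝒜 u (a + N + 1 - k (Fin.castLE hl i)) : R)) (hMrel i)
        simp only at h1
        rw [DirectSum.decompose_of_mem_same 𝒜 (htmem i)] at h1
        rw [h1, DirectSum.decompose_sum, DFinsupp.finset_sum_apply]
        push_cast
        apply Finset.sum_congr rfl
        intro j _
        rw [DirectSum.coe_decompose_mul_of_right_mem 𝒜 _ (hx _)]
        simp only [hM'def]
        by_cases hkj : k (Fin.castLE hl j) ≤ a + N + 1 - k (Fin.castLE hl i)
        · rw [if_pos hkj, if_pos (by omega), Nat.sub_sub]
        · rw [if_neg hkj, if_neg (by omega), zero_mul]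
      · rw [ht0 i hki]
        symm
        apply Finset.sum_eq_zero
        intro j _
        simp only [hM'def]
        rw [if_neg (by omega), zero_mul]
    -- the new coefficients
    set r'' : Fin l → R := fun i => r i - t i -
      ∑ j, M' i j * (y (Fin.castLE hl j) - x (Fin.castLE hl j)) with hr''def
    have hr'' : ∀ i, Fmem 𝒜 ((a : ℤ) + N - k (Fin.castLE hl i)) (r'' i) := by
      intro i
      apply Fmem_sub
      · by_cases hki : k (Fin.castLE hl i) ≤ a + N + 1
        · have hcast : ((a + N + 1 - k (Fin.castLE hl i) : ℕ) : ℤ)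
              = (a : ℤ) + (N + 1) - k (Fin.castLE hl i) := by
            rw [Nat.cast_sub hki]; push_cast; ring
          have h2 := Fmem_sub_top 𝒜 (r i) (a + N + 1 - k (Fin.castLE hl i))
            (Fmem_mono 𝒜 (le_of_eq (by rw [hcast]; push_cast; ring)) (hr i))
          exact Fmem_mono 𝒜 (le_of_eq (by rw [hcast]; push_cast; ring)) h2
        · rw [ht0 i hki, sub_zero]
          intro p hp
          exact hr i p (by push_cast; omega)
      · apply Fmem_sum
        intro j _
        exact Fmem_mono 𝒜 (le_of_eq (by push_cast; ring))
          (Fmem_mul 𝒜 (hM'fm i j) (hxy (Fin.castLE hl j)))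
    have hz' : ∑ i, r'' i * y (Fin.castLE hl i) = ∑ i, r i * y (Fin.castLE hl i) := by
      have hkey : ∑ i, ∑ j, M' i j * y (Fin.castLE hl j) * y (Fin.castLE hl i) = 0 := by
        apply sum_antisym
        · intro i j
          rw [hM'anti i j]
          ring
        · intro i
          rw [hM'diag i]
          ring
      have hexp : ∀ i, r'' i * y (Fin.castLE hl i) = r i * y (Fin.castLE hl i) -
          ∑ j, M' i j * y (Fin.castLE hl j) * y (Fin.castLE hl i) := by
        intro i
        have h4 : (∑ j, M' i j * x (Fin.castLE hl j)) +
            (∑ j, M' i j * (y (Fin.castLE hl j) - x (Fin.castLE hl j)))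
            = ∑ j, M' i j * y (Fin.castLE hl j) := by
          rw [← Finset.sum_add_distrib]
          exact Finset.sum_congr rfl fun j _ => by ring
        have h3 : r'' i = r i - ∑ j, M' i j * y (Fin.castLE hl j) := by
          rw [hr''def]
          simp only
          rw [hrel' i]
          linear_combination -h4
        rw [h3, sub_mul, Finset.sum_mul]
      rw [Finset.sum_congr rfl (fun i _ => hexp i), Finset.sum_sub_distrib, hkey, sub_zero]
    have hFz'' : Fmem 𝒜 (a : ℤ) (∑ i, r'' i * y (Fin.castLE hl i)) := by
      rw [hz']; exact hFz
    have hfinal := ih r'' hr'' hFz''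
    rw [hz'] at hfinal
    exact hfinal

end mainproof


/-- Lemma 4.1: in an ℕ-graded commutative ring `R`, let `yᵢ = xᵢ + (lower degree terms)`
with `xᵢ ∈ R_{kᵢ}` homogeneous, and suppose `x₁, …, xₙ` is `R`-regular in every order.
If `z = r₁y₁ + ⋯ + r_l y_l ∈ F^aR`, then the degree-`a` homogeneous component of `z`
lies in `(x₁, …, x_l)`. -/
theorem stmt_4 {R : Type*} [CommRing R] (𝒜 : ℕ → AddSubgroup R) [GradedRing 𝒜]
    (n : ℕ) (x y : Fin n → R) (k : Fin n → ℕ)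
    (hx : ∀ i, x i ∈ 𝒜 (k i))
    (hxy : ∀ i, Fmem 𝒜 ((k i : ℤ) - 1) (y i - x i))
    (hreg : ∀ l : List R, l.Perm (List.ofFn x) → IsRegularSeq l)
    (l : ℕ) (hl : l ≤ n) (r : Fin l → R) (a : ℤ)
    (hz : Fmem 𝒜 a (∑ i : Fin l, r i * y (Fin.castLE hl i))) :
    ∀ p : ℕ, (p : ℤ) = a →
      (DirectSum.decompose 𝒜 (∑ i : Fin l, r i * y (Fin.castLE hl i)) p : R) ∈
        Ideal.span (Set.range fun i : Fin l => x (Fin.castLE hl i)) := by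
  intro p hp
  classical
  choose c hcf using fun i : Fin l => exists_Fmem 𝒜 (r i)
  set N : ℕ := Finset.univ.sup (fun i : Fin l => c i + k (Fin.castLE hl i)) with hN
  have hr : ∀ i, Fmem 𝒜 ((p : ℤ) + N - k (Fin.castLE hl i)) (r i) := by
    intro i
    refine Fmem_mono 𝒜 ?_ (hcf i)
    have h1 : c i + k (Fin.castLE hl i) ≤ N :=
      Finset.le_sup (f := fun i : Fin l => c i + k (Fin.castLE hl i)) (Finset.mem_univ i)
    push_cast
    omega
  have hz' : Fmem 𝒜 (p : ℤ) (∑ i : Fin l, r i * y (Fin.castLE hl i)) := by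
    rw [hp]; exact hz
  exact main_claim 𝒜 x y k hx hxy hreg hl p N r hr hz'
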